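/- arXiv:2503.19710 — 3 statements merged into one kernel-verified Lean document; each statement's English description precedes it below -/
import Mathlib

section
/- Let Γ be a d×d symmetric positive definite real matrix and let R be a d×d P-matrix (so R_{kk} > 0 for all k). Set Λ = diag(Γ_{11}^{−1/2},…,Γ_{dd}^{−1/2}) and V = diag(R_{11}^{−1},…,R_{dd}^{−1}). If the skew symmetric condition 2ΛΓΛ = ΛRVΛ^{−1} + Λ^{−1}V Rᵀ Λ holds, then for every k ∈ {1,…,d}, m_k = (u_kᵀ Γ u_k)/(2 u_kᵀ R_{:,k}) = Γ_{kk}/(2 R_{kk}). -/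
open MeasureTheory Filter

noncomputable section

namespace SRBMPaper

/-- The nonnegative orthant `ℝ₊^d`. -/
def posOrthant (d : ℕ) : Set (Fin d → ℝ) := {z | ∀ i, 0 ≤ z i}

/-- `R` is a P-matrix: every principal minor is positive. -/
def IsPMatrix {d : ℕ} (R : Matrix (Fin d) (Fin d) ℝ) : Prop :=
  ∀ s : Finset (Fin d),
    0 < (R.submatrix (fun i : s => (i : Fin d)) (fun i : s => (i : Fin d))).det

/-- `R` is a nonsingular M-matrix: nonpositive off-diagonal entries and
every principal minor positive. -/
def IsMMatrix {d : ℕ} (R : Matrix (Fin d) (Fin d) ℝ) : Prop :=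
  (∀ i j, i ≠ j → R i j ≤ 0) ∧ IsPMatrix R

/-- First-order partial derivative of `f` in coordinate `j`. -/
def pd1 {d : ℕ} (f : (Fin d → ℝ) → ℝ) (j : Fin d) (z : Fin d → ℝ) : ℝ :=
  fderiv ℝ f z (Pi.single j 1)

/-- Second-order partial derivative of `f` in coordinates `i`, `j`. -/
def pd2 {d : ℕ} (f : (Fin d → ℝ) → ℝ) (i j : Fin d) (z : Fin d → ℝ) : ℝ :=
  fderiv ℝ (fun w => pd1 f j w) z (Pi.single i 1)

/-- `f` is twice continuously differentiable and `f` together with all of its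
first- and second-order partial derivatives is bounded on the orthant. -/
def IsC2Bounded {d : ℕ} (f : (Fin d → ℝ) → ℝ) : Prop :=
  ContDiff ℝ 2 f ∧
    ∃ C : ℝ, ∀ z ∈ posOrthant d,
      |f z| ≤ C ∧ (∀ j, |pd1 f j z| ≤ C) ∧ (∀ i j, |pd2 f i j z| ≤ C)

/-- The basic adjoint relationship (BAR) at traffic-intensity parameter `r`. -/
def SatisfiesBAR {d : ℕ} (Γ R : Matrix (Fin d) (Fin d) ℝ) (r : ℝ)
    (π : Measure (Fin d → ℝ)) (ν : Fin d → Measure (Fin d → ℝ)) : Prop :=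
  ∀ f : (Fin d → ℝ) → ℝ, IsC2Bounded f →
    (1 / 2) * (∫ z, ∑ i, ∑ j, Γ i j * pd2 f i j z ∂π)
      - (∑ i : Fin d, r ^ ((i : ℕ) + 1) * ∫ z, ∑ j, R j i * pd1 f j z ∂π)
      + (∑ i : Fin d, r ^ ((i : ℕ) + 1) * ∫ z, ∑ j, R j i * pd1 f j z ∂(ν i)) = 0

/-- For every `r ∈ (0,1)`, `π r` is a Borel probability measure on the orthant,
each `ν i r` is a Borel probability measure on the face `{z i = 0}` of the orthant,
and together they satisfy the basic adjoint relationship. -/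
def BARFamily {d : ℕ} (Γ R : Matrix (Fin d) (Fin d) ℝ)
    (π : ℝ → Measure (Fin d → ℝ)) (ν : Fin d → ℝ → Measure (Fin d → ℝ)) : Prop :=
  ∀ r ∈ Set.Ioo (0 : ℝ) 1,
    IsProbabilityMeasure (π r) ∧ π r (posOrthant d) = 1 ∧
    (∀ i, IsProbabilityMeasure (ν i r) ∧
      ν i r {z | z ∈ posOrthant d ∧ z i = 0} = 1) ∧
    SatisfiesBAR Γ R r (π r) (fun i => ν i r)

/-- `u` is the vector `u_k` associated with the matrix `R`:
`u_k = (w_{1k}, …, w_{k-1,k}, 1, 0, …, 0)ᵀ` where the weights solve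
`∑_{j<k} w_{jk} R_{jℓ} + R_{kℓ} = 0` for all `ℓ < k`. -/
def IsUk {d : ℕ} (R : Matrix (Fin d) (Fin d) ℝ) (k : Fin d) (u : Fin d → ℝ) : Prop :=
  u k = 1 ∧ (∀ j, k < j → u j = 0) ∧
    ∀ ℓ, ℓ < k →
      (∑ j ∈ Finset.univ.filter (fun j => j < k), u j * R j ℓ) + R k ℓ = 0

/-- `uᵀ R_{:,i}`, the pairing of `u` with the `i`-th column of `R`. -/
def uR {d : ℕ} (R : Matrix (Fin d) (Fin d) ℝ) (u : Fin d → ℝ) (i : Fin d) : ℝ :=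
  ∑ j, u j * R j i

/-- The quadratic form `uᵀ Γ u`. -/
def quadForm {d : ℕ} (Γ : Matrix (Fin d) (Fin d) ℝ) (u : Fin d → ℝ) : ℝ :=
  ∑ i, ∑ j, u i * Γ i j * u j

/-- The limiting mean `m_k = (u_kᵀ Γ u_k) / (2 u_kᵀ R_{:,k})`. -/
def meanOf {d : ℕ} (Γ R : Matrix (Fin d) (Fin d) ℝ) (u : Fin d → ℝ) (k : Fin d) : ℝ :=
  quadForm Γ u / (2 * uR R u k)

/-- The exponential distribution on `ℝ` with mean `m`. -/
def expMean (m : ℝ) : Measure ℝ :=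
  (volume : Measure ℝ).withDensity fun x =>
    ENNReal.ofReal (if 0 ≤ x then m⁻¹ * Real.exp (-x / m) else 0)

/-- The law of a vector of independent exponential random variables with means `m k`. -/
def prodExp {d : ℕ} (m : Fin d → ℝ) : Measure (Fin d → ℝ) :=
  Measure.pi fun k => expMean (m k)

/-- The pushforwards of `π r` under `z ↦ (r z_1, r² z_2, …, r^d z_d)` converge weakly
to `μ` as `r → 0` (convergence tested against bounded continuous functions). -/
def ScaledWeakLimit {d : ℕ} (π : ℝ → Measure (Fin d → ℝ)) (μ : Measure (Fin d → ℝ)) : Prop :=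
  ∀ g : BoundedContinuousFunction (Fin d → ℝ) ℝ,
    Tendsto (fun r : ℝ => ∫ z, g (fun i => r ^ ((i : ℕ) + 1) * z i) ∂(π r))
      (nhdsWithin 0 (Set.Ioo 0 1)) (nhds (∫ z, g z ∂μ))

/-- The uniform moment bound condition: for all coordinates `i, k`, the `d`-th moment
of `r^k Z_k` under `π r` is bounded for small `r`, and `r` times its `d`-th moment
under `ν i r` tends to `0` as `r → 0`. -/
def UniformMomentBound {d : ℕ} (π : ℝ → Measure (Fin d → ℝ))
    (ν : Fin d → ℝ → Measure (Fin d → ℝ)) : Prop :=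
  ∀ i k : Fin d,
    (∃ r₁ > (0 : ℝ), ∃ C : ℝ, ∀ r ∈ Set.Ioo (0 : ℝ) (min r₁ 1),
      (∫ z, (r ^ ((k : ℕ) + 1) * z k) ^ d ∂(π r)) ≤ C) ∧
    Tendsto (fun r : ℝ => r * ∫ z, (r ^ ((k : ℕ) + 1) * z k) ^ d ∂(ν i r))
      (nhdsWithin 0 (Set.Ioo 0 1)) (nhds 0)

/-- The truncation function `κ`. -/
def kappa (x : ℝ) : ℝ :=
  if x ≤ 1 then x
  else if x ≤ 2 then 3*x^5 - 22*x^4 + 62*x^3 - 84*x^2 + 56*x - 14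
  else 2

/-- The vector `θ_k^{(r)} = ∑_{ℓ=k}^d r^ℓ η_ℓ u_ℓ`. -/
def thetaK {d : ℕ} (u : Fin d → Fin d → ℝ) (η : Fin d → ℝ) (k : Fin d) (r : ℝ) :
    Fin d → ℝ :=
  fun j => ∑ ℓ ∈ Finset.univ.filter (fun ℓ => k ≤ ℓ), r ^ ((ℓ : ℕ) + 1) * η ℓ * u ℓ j

/-- The vector `θ̃_k^{(r)} = r^{k+1/2} η_k u_k + ∑_{ℓ=k+1}^d r^ℓ η_ℓ u_ℓ`. -/
def thetaKt {d : ℕ} (u : Fin d → Fin d → ℝ) (η : Fin d → ℝ) (k : Fin d) (r : ℝ) :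
    Fin d → ℝ :=
  fun j => r ^ ((((k : ℕ) : ℝ) + 1) + 1/2) * η k * u k j
    + ∑ ℓ ∈ Finset.univ.filter (fun ℓ => k < ℓ), r ^ ((ℓ : ℕ) + 1) * η ℓ * u ℓ j

/-- The truncated exponential test function `f̃_θ(z) = exp(∑ κ(θ_i z_i))`. -/
def ftilde {d : ℕ} (θ z : Fin d → ℝ) : ℝ := Real.exp (∑ i, kappa (θ i * z i))

/-- Gradient extra term `ε_{g,θ,j}(z) = θ_j (κ'(θ_j z_j) − 1)`. -/
def epsG {d : ℕ} (θ : Fin d → ℝ) (j : Fin d) (z : Fin d → ℝ) : ℝ :=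
  θ j * (deriv kappa (θ j * z j) - 1)

/-- Hessian extra term `ε_{H,θ,ij}(z)`. -/
def epsH {d : ℕ} (θ : Fin d → ℝ) (i j : Fin d) (z : Fin d → ℝ) : ℝ :=
  θ i * θ j * (deriv kappa (θ i * z i) * deriv kappa (θ j * z j) - 1)
    + (if i = j then θ i ^ 2 * deriv (deriv kappa) (θ i * z i) else 0)

/-- The extra term `γ^r(θ)` in the truncated MGF-BAR. -/
def gammaTerm {d : ℕ} (Γ R : Matrix (Fin d) (Fin d) ℝ) (r : ℝ)
    (π : Measure (Fin d → ℝ)) (ν : Fin d → Measure (Fin d → ℝ))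
    (θ : Fin d → ℝ) : ℝ :=
  (1/2) * (∫ z, (∑ i, ∑ j, Γ i j * epsH θ i j z) * ftilde θ z ∂π)
    + ∑ i : Fin d, r ^ ((i : ℕ) + 1) *
        ((∫ z, (∑ j, epsG θ j z * R j i) * ftilde θ z ∂(ν i))
          - ∫ z, (∑ j, epsG θ j z * R j i) * ftilde θ z ∂π)


/-- Under the skew symmetric condition
`2ΛΓΛ = ΛRVΛ⁻¹ + Λ⁻¹VR.transposeΛ` with `Λ = diag(Γ_{kk}^{−1/2})` and `V = diag(R_{kk}^{−1})`,
the limiting means reduce to `m_k = Γ_{kk}/(2R_{kk})`. -/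
theorem skew_symmetric_means
    {d : ℕ} (Γ R : Matrix (Fin d) (Fin d) ℝ)
    (hΓsymm : Γ.IsSymm) (hΓpd : Γ.PosDef) (hR : IsPMatrix R)
    (u : Fin d → Fin d → ℝ) (hu : ∀ k, IsUk R k (u k))
    (Λ V : Matrix (Fin d) (Fin d) ℝ)
    (hΛ : Λ = Matrix.diagonal fun k => (Real.sqrt (Γ k k))⁻¹)
    (hV : V = Matrix.diagonal fun k => (R k k)⁻¹)
    (hskew : (2 : ℝ) • (Λ * Γ * Λ) = Λ * R * V * Λ⁻¹ + Λ⁻¹ * V * R.transpose * Λ) :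
    ∀ k : Fin d, meanOf Γ R (u k) k = Γ k k / (2 * R k k) := by
  -- diagonal entries are positive
  have hΓd : ∀ m, 0 < Γ m m := by
    intro m
    exact hΓpd.diag_pos
  have hRd : ∀ m, 0 < R m m := by
    intro m
    have h1 := hR {m}
    haveI : Unique ({m} : Finset (Fin d)) :=
      ⟨⟨⟨m, by simp⟩⟩, by rintro ⟨a, ha⟩; simp only [Finset.mem_singleton] at ha; simp [ha]⟩
    rw [Matrix.det_unique] at h1
    have hd : ((default : ({m} : Finset (Fin d))) : Fin d) = m :=
      Finset.mem_singleton.mp (Subtype.mem _)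
    rw [Matrix.submatrix_apply] at h1
    rwa [hd] at h1
  -- the skew-symmetry condition entrywise
  have hs : ∀ m, 0 < Real.sqrt (Γ m m) := fun m => Real.sqrt_pos.mpr (hΓd m)
  have hsq : ∀ m, Real.sqrt (Γ m m) ^ 2 = Γ m m := fun m => Real.sq_sqrt (hΓd m).le
  have hinv : Λ⁻¹ = Matrix.diagonal fun m => Real.sqrt (Γ m m) := by
    apply Matrix.inv_eq_right_inv
    rw [hΛ, Matrix.diagonal_mul_diagonal]
    convert Matrix.diagonal_one using 2
    ext m
    exact inv_mul_cancel₀ (hs m).ne'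
  have hstar : ∀ i j, 2 * Γ i j = Γ j j * R i j / R j j + Γ i i * R j i / R i i := by
    intro i j
    have h := congrFun (congrFun hskew i) j
    rw [hinv, hΛ, hV] at h
    simp only [Matrix.smul_apply, Matrix.add_apply, Matrix.mul_apply, Matrix.diagonal_apply,
      Matrix.transpose_apply, smul_eq_mul] at h
    simp only [Finset.sum_ite_eq, Finset.sum_ite_eq', Finset.mem_univ, if_true,
      ite_mul, mul_ite, zero_mul, mul_zero, Finset.sum_ite_irrel, Finset.sum_const_zero] at h
    field_simp [(hs i).ne', (hs j).ne', (hRd i).ne', (hRd j).ne'] at h ⊢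
    have hne : Real.sqrt (Γ i i) * Real.sqrt (Γ j j) ≠ 0 :=
      mul_ne_zero (hs i).ne' (hs j).ne'
    apply mul_right_cancel₀ hne
    linear_combination (Real.sqrt (Γ i i) * Real.sqrt (Γ j j)) * h + (R i j * R i i * Real.sqrt (Γ i i) * Real.sqrt (Γ j j)) * hsq j
      + (R j i * R j j * Real.sqrt (Γ i i) * Real.sqrt (Γ j j)) * hsq i
  intro k
  obtain ⟨huk, hugt, huw⟩ := hu k
  -- sum splitting helpers
  have hle : ∀ f : Fin d → ℝ,
      ∑ m ∈ Finset.univ.filter (fun m => m ≤ k), f m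
        = (∑ m ∈ Finset.univ.filter (fun m => m < k), f m) + f k := by
    intro f
    have h : Finset.univ.filter (fun m => m ≤ k)
        = insert k (Finset.univ.filter (fun m => m < k)) := by
      ext j; simp [le_iff_lt_or_eq, or_comm]
    rw [h, Finset.sum_insert (by simp), add_comm]
  have hsplit : ∀ f : Fin d → ℝ,
      ∑ m, f m = ((∑ m ∈ Finset.univ.filter (fun m => m < k), f m) + f k)
        + ∑ m ∈ Finset.univ.filter (fun m => k < m), f m := by
    intro f
    rw [← Finset.sum_filter_add_sum_filter_not Finset.univ (fun m => m ≤ k), hle]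
    simp [not_le]
  have hgt0 : ∀ (g : Fin d → ℝ),
      ∑ m ∈ Finset.univ.filter (fun m => k < m), u k m * g m = 0 := by
    intro g
    apply Finset.sum_eq_zero
    intro m hm
    rw [hugt m (by simpa using hm)]
    ring
  -- uR vanishes below k
  have huR0 : ∀ j, j < k → uR R (u k) j = 0 := by
    intro j hj
    unfold uR
    rw [hsplit (fun m => u k m * R m j), hgt0 (fun m => R m j), add_zero, huk, one_mul]
    exact huw j hj
  have huRk_eq : uR R (u k) k
      = (∑ m ∈ Finset.univ.filter (fun m => m < k), u k m * R m k) + R k k := by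
    unfold uR
    rw [hsplit (fun m => u k m * R m k), hgt0 (fun m => R m k), add_zero, huk, one_mul]
  -- quadForm identity
  have hq : quadForm Γ (u k) = Γ k k / R k k * uR R (u k) k := by
    have e1 : (2 : ℝ) * quadForm Γ (u k)
        = 2 * ∑ j, Γ j j / R j j * (u k j * uR R (u k) j) := by
      unfold quadForm uR
      have step1 : (2 : ℝ) * ∑ i, ∑ j, u k i * Γ i j * u k j
          = (∑ i, ∑ j, u k i * u k j * (Γ j j * R i j / R j j))
            + ∑ i, ∑ j, u k i * u k j * (Γ i i * R j i / R i i) := by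
        rw [← Finset.sum_add_distrib, Finset.mul_sum]
        apply Finset.sum_congr rfl
        intro i _
        rw [← Finset.sum_add_distrib, Finset.mul_sum]
        apply Finset.sum_congr rfl
        intro j _
        linear_combination (u k i * u k j) * hstar i j
      have step2 : (∑ i, ∑ j, u k i * u k j * (Γ i i * R j i / R i i))
          = ∑ i, ∑ j, u k i * u k j * (Γ j j * R i j / R j j) := by
        rw [Finset.sum_comm]
        apply Finset.sum_congr rfl
        intro i _
        apply Finset.sum_congr rfl
        intro j _
        ring
      rw [step1, step2, ← two_mul]
      congr 1
      rw [Finset.sum_comm]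
      apply Finset.sum_congr rfl
      intro j _
      simp only [Finset.mul_sum]
      apply Finset.sum_congr rfl
      intro i _
      ring
    have e2 : ∑ j, Γ j j / R j j * (u k j * uR R (u k) j)
        = Γ k k / R k k * uR R (u k) k := by
      rw [Finset.sum_eq_single k]
      · rw [huk, one_mul]
      · intro j _ hj
        rcases lt_or_gt_of_ne hj with h | h
        · rw [huR0 j h]; ring
        · rw [hugt j h]; ring
      · intro h; exact absurd (Finset.mem_univ k) h
    rw [e2] at e1
    linarith
  -- uR at k is nonzero
  have huRk_ne : uR R (u k) k ≠ 0 := by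
    intro h0
    let s : Finset (Fin d) := Finset.univ.filter (fun m => m ≤ k)
    have hks : k ∈ s := by simp [s]
    have hdet : (R.submatrix (fun i : s => (i : Fin d)) (fun i : s => (i : Fin d))).det ≠ 0 :=
      (hR s).ne'
    have hvM : Matrix.vecMul (fun i : s => u k (i : Fin d))
        (R.submatrix (fun i : s => (i : Fin d)) (fun i : s => (i : Fin d))) = 0 := by
      funext j
      have hj : (j : Fin d) ≤ k := by
        have h2 := j.2
        simp only [s, Finset.mem_filter] at h2
        exact h2.2
      show ∑ i : s, u k (i : Fin d) * R (i : Fin d) (j : Fin d) = 0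
      rw [Finset.sum_coe_sort s (fun i => u k i * R i (j : Fin d)),
        hle (fun i => u k i * R i (j : Fin d)), huk, one_mul]
      rcases lt_or_eq_of_le hj with h | h
      · exact huw _ h
      · rw [h]
        rw [huRk_eq] at h0
        exact h0
    have hv0 := Matrix.eq_zero_of_vecMul_eq_zero hdet hvM
    have h1 : u k ((⟨k, hks⟩ : s) : Fin d) = 0 := congrFun hv0 ⟨k, hks⟩
    rw [huk] at h1
    exact one_ne_zero h1
  -- conclude
  unfold meanOf
  rw [hq, div_eq_div_iff (mul_ne_zero two_ne_zero huRk_ne)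
    (mul_ne_zero two_ne_zero (hRd k).ne')]
  field_simp [(hRd k).ne']

end SRBMPaper
end
end

section
/- Let R be a d×d nonsingular M-matrix. Then for every k ∈ {1,…,d}: the weights w_{jk} are nonnegative for all j < k (so the vector u_k has nonnegative entries), and u_kᵀ R_{:,i} ≤ 0 for every i with k < i ≤ d. -/
open MeasureTheory Filter

noncomputable section

namespace SRBMPaper

section MMatrixAux

variable {d : ℕ}

private lemma filter_lt_eq_map (N : ℕ) (hN : N ≤ d) :
    Finset.univ.filter (fun j : Fin d => (j : ℕ) < N)
      = Finset.map ⟨Fin.castLE hN, Fin.castLE_injective hN⟩ Finset.univ := by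
  ext j
  simp only [Finset.mem_filter, Finset.mem_univ, true_and, Finset.mem_map,
    Function.Embedding.coeFn_mk]
  constructor
  · intro h
    exact ⟨⟨(j : ℕ), h⟩, rfl⟩
  · rintro ⟨i, rfl⟩
    exact i.isLt

private lemma sum_filter_lt (N : ℕ) (hN : N ≤ d) (h : Fin d → ℝ) :
    ∑ j ∈ Finset.univ.filter (fun j : Fin d => (j : ℕ) < N), h j
      = ∑ i : Fin N, h (Fin.castLE hN i) := by
  rw [filter_lt_eq_map N hN, Finset.sum_map]
  rfl

private lemma sum_filter_lt' (k : Fin d) (h : Fin d → ℝ) :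
    ∑ j ∈ Finset.univ.filter (fun j : Fin d => j < k), h j
      = ∑ i : Fin (k : ℕ), h (Fin.castLE k.isLt.le i) := by
  rw [← sum_filter_lt (k : ℕ) k.isLt.le h]
  exact Finset.sum_congr (Finset.filter_congr (fun x _ => Fin.lt_def)) fun _ _ => rfl

private lemma subdet_pos {R : Matrix (Fin d) (Fin d) ℝ} (hR : IsPMatrix R)
    {n : ℕ} (f : Fin n → Fin d) (hf : Function.Injective f) :
    0 < (R.submatrix f f).det := by
  set s : Finset (Fin d) := Finset.univ.map ⟨f, hf⟩ with hs
  have hmem : ∀ i : Fin n, f i ∈ s := by intro i; simp [hs]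
  have hbij : Function.Bijective (fun i : Fin n => (⟨f i, hmem i⟩ : s)) := by
    constructor
    · intro a b hab
      exact hf (congrArg Subtype.val hab)
    · rintro ⟨j, hj⟩
      simp only [hs, Finset.mem_map, Finset.mem_univ, Function.Embedding.coeFn_mk,
        true_and] at hj
      obtain ⟨i, hi⟩ := hj
      exact ⟨i, by simp [hi]⟩
  set e : Fin n ≃ s := Equiv.ofBijective _ hbij with he
  have hsub : (R.submatrix (fun i : s => (i : Fin d)) (fun i : s => (i : Fin d))).submatrix e e
      = R.submatrix f f := rfl
  have h1 := hR s
  rw [← Matrix.det_submatrix_equiv_self e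
      (R.submatrix (fun i : s => (i : Fin d)) (fun i : s => (i : Fin d))), hsub] at h1
  exact h1

private lemma uR_eq_sum (R : Matrix (Fin d) (Fin d) ℝ) (w : Fin d → ℝ) (k : Fin d)
    (hw : ∀ j, k < j → w j = 0) (c : Fin d) :
    uR R w c = ∑ i : Fin ((k : ℕ) + 1), w (Fin.castLE k.isLt i) * R (Fin.castLE k.isLt i) c := by
  have hzero : ∑ j ∈ Finset.univ.filter (fun j : Fin d => ¬ (j : ℕ) < (k : ℕ) + 1),
      w j * R j c = 0 := by
    apply Finset.sum_eq_zero
    intro j hj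
    simp only [Finset.mem_filter, Finset.mem_univ, true_and, not_lt] at hj
    rw [hw j (Fin.lt_def.mpr (by omega)), zero_mul]
  have hsplit := Finset.sum_filter_add_sum_filter_not Finset.univ
    (fun j : Fin d => (j : ℕ) < (k : ℕ) + 1) (fun j => w j * R j c)
  rw [uR, ← hsplit, hzero, add_zero, sum_filter_lt ((k : ℕ) + 1) k.isLt (fun j => w j * R j c)]

private lemma filter_sum_eq_uR (R : Matrix (Fin d) (Fin d) ℝ) (w : Fin d → ℝ) (k : Fin d)
    (hw : ∀ j : Fin d, ¬ j < k → w j = 0) (c : Fin d) :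
    ∑ j ∈ Finset.univ.filter (fun j : Fin d => j < k), w j * R j c = uR R w c := by
  have hzero : ∑ j ∈ Finset.univ.filter (fun j : Fin d => ¬ j < k), w j * R j c = 0 := by
    apply Finset.sum_eq_zero
    intro j hj
    simp only [Finset.mem_filter, Finset.mem_univ, true_and] at hj
    rw [hw j hj, zero_mul]
  have hsplit := Finset.sum_filter_add_sum_filter_not Finset.univ
    (fun j : Fin d => j < k) (fun j => w j * R j c)
  rw [uR, ← hsplit, hzero, add_zero]

private lemma uR_offdiag (R : Matrix (Fin d) (Fin d) ℝ) {k : Fin d} {uk : Fin d → ℝ}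
    (huk : IsUk R k uk) {ℓ : Fin d} (hℓ : ℓ < k) : uR R uk ℓ = 0 := by
  have hsplit := Finset.sum_filter_add_sum_filter_not Finset.univ (fun j : Fin d => j < k)
    (fun j => uk j * R j ℓ)
  have h2 : ∑ j ∈ Finset.univ.filter (fun j : Fin d => ¬ j < k), uk j * R j ℓ = R k ℓ := by
    rw [Finset.sum_eq_single k]
    · rw [huk.1, one_mul]
    · intro b hb hbk
      simp only [Finset.mem_filter, Finset.mem_univ, true_and, not_lt] at hb
      rw [huk.2.1 b (lt_of_le_of_ne hb (Ne.symm hbk)), zero_mul]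
    · intro hk
      exact absurd (Finset.mem_filter.mpr ⟨Finset.mem_univ k, lt_irrefl k⟩) hk
  rw [uR, ← hsplit, h2]
  exact huk.2.2 ℓ hℓ

private lemma diag_pos {R : Matrix (Fin d) (Fin d) ℝ} (hR : IsMMatrix R)
    {k : Fin d} {uk : Fin d → ℝ} (huk : IsUk R k uk) : 0 < uR R uk k := by
  have hm1 : (k : ℕ) + 1 ≤ d := k.isLt
  set f : Fin ((k : ℕ) + 1) → Fin d := Fin.castLE k.isLt with hf
  have hfk : f (Fin.last (k : ℕ)) = k := rfl
  set B : Matrix (Fin ((k : ℕ) + 1)) (Fin ((k : ℕ) + 1)) ℝ := R.submatrix f f with hB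
  set L : Matrix (Fin ((k : ℕ) + 1)) (Fin ((k : ℕ) + 1)) ℝ :=
    fun i j => if i = Fin.last (k : ℕ) then uk (f j) else if i = j then 1 else 0 with hL
  have hLdet : L.det = 1 := by
    rw [Matrix.det_of_lowerTriangular L ?ht]
    · apply Finset.prod_eq_one
      intro i _
      by_cases hi : i = Fin.last (k : ℕ)
      · subst hi
        simp only [hL, if_pos rfl, hfk]
        exact huk.1
      · simp [hL, hi]
    case ht =>
      intro i j hij
      have hij' : i < j := hij
      have hine : i ≠ Fin.last (k : ℕ) := ne_of_lt (lt_of_lt_of_le hij' (Fin.le_last j))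
      simp [hL, hine, ne_of_lt hij']
  have hrow : ∀ j, (L * B) (Fin.last (k : ℕ)) j
      = if j = Fin.last (k : ℕ) then uR R uk k else 0 := by
    intro j
    have h1 : (L * B) (Fin.last (k : ℕ)) j = ∑ t : Fin ((k : ℕ) + 1),
        uk (f t) * R (f t) (f j) := by
      rw [Matrix.mul_apply]
      apply Finset.sum_congr rfl
      intro t _
      simp [hL, hB]
    rw [h1, ← uR_eq_sum R uk k huk.2.1 (f j)]
    by_cases hj : j = Fin.last (k : ℕ)
    · rw [if_pos hj, hj, hfk]
    · rw [if_neg hj]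
      apply uR_offdiag R huk
      have hjv : (j : ℕ) < (k : ℕ) := by
        have := j.isLt
        have : (j : ℕ) ≠ (k : ℕ) := fun hc => hj (Fin.ext hc)
        omega
      exact Fin.lt_def.mpr hjv
  have hother : ∀ i, i ≠ Fin.last (k : ℕ) → ∀ j, (L * B) i j = B i j := by
    intro i hi j
    rw [Matrix.mul_apply, Finset.sum_eq_single i]
    · simp [hL, hi]
    · intro b _ hbi
      simp [hL, hi, Ne.symm hbi]
    · intro h
      exact absurd (Finset.mem_univ i) h
  have hexp := Matrix.det_succ_row (L * B) (Fin.last (k : ℕ))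
  rw [Finset.sum_eq_single (Fin.last (k : ℕ))] at hexp
  · have hsign : ((-1 : ℝ) ^ ((Fin.last (k : ℕ) : ℕ) + (Fin.last (k : ℕ) : ℕ))) = 1 :=
      Even.neg_one_pow ⟨(k : ℕ), rfl⟩
    rw [hsign, one_mul, hrow, if_pos rfl] at hexp
    have hminor : (L * B).submatrix (Fin.last (k : ℕ)).succAbove (Fin.last (k : ℕ)).succAbove
        = R.submatrix (f ∘ Fin.castSucc) (f ∘ Fin.castSucc) := by
      ext i j
      rw [Matrix.submatrix_apply, Fin.succAbove_last_apply, Fin.succAbove_last_apply,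
        hother _ (ne_of_lt (Fin.castSucc_lt_last i)) _]
      rfl
    rw [hminor] at hexp
    have hminor_pos : 0 < (R.submatrix (f ∘ Fin.castSucc) (f ∘ Fin.castSucc)).det :=
      subdet_pos hR.2 _ ((Fin.castLE_injective hm1).comp (Fin.castSucc_injective _))
    have hBpos : 0 < B.det := subdet_pos hR.2 f (Fin.castLE_injective hm1)
    have hLB : (L * B).det = B.det := by rw [Matrix.det_mul, hLdet, one_mul]
    rw [hLB] at hexp
    nlinarith [hminor_pos, hBpos, hexp]
  · intro b _ hb
    rw [hrow b, if_neg hb, mul_zero, zero_mul]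
  · intro h
    exact absurd (Finset.mem_univ _) h

private lemma uk_unique {R : Matrix (Fin d) (Fin d) ℝ} (hR : IsMMatrix R)
    {k : Fin d} {v v' : Fin d → ℝ} (hv : IsUk R k v) (hv' : IsUk R k v') : v = v' := by
  set g : Fin (k : ℕ) → Fin d := Fin.castLE k.isLt.le with hg
  set A : Matrix (Fin (k : ℕ)) (Fin (k : ℕ)) ℝ := R.submatrix g g with hA
  have hAdet : IsUnit A.det :=
    isUnit_iff_ne_zero.mpr (ne_of_gt (subdet_pos hR.2 g (Fin.castLE_injective k.isLt.le)))
  set x : Fin (k : ℕ) → ℝ := fun i => v (g i) - v' (g i) with hx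
  have hxA : Matrix.vecMul x A = 0 := by
    funext ℓ
    have hglt : g ℓ < k := Fin.lt_def.mpr ℓ.isLt
    have h1 := hv.2.2 (g ℓ) hglt
    have h2 := hv'.2.2 (g ℓ) hglt
    rw [sum_filter_lt' k (fun j => v j * R j (g ℓ))] at h1
    rw [sum_filter_lt' k (fun j => v' j * R j (g ℓ))] at h2
    have e1 : (Matrix.vecMul x A) ℓ = ∑ i : Fin (k : ℕ), (v (g i) - v' (g i)) * R (g i) (g ℓ) := by
      simp [Matrix.vecMul, dotProduct, hx, hA]
    have e2 : ∑ i : Fin (k : ℕ), (v (g i) - v' (g i)) * R (g i) (g ℓ)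
        = (∑ i : Fin (k : ℕ), v (g i) * R (g i) (g ℓ))
          - ∑ i : Fin (k : ℕ), v' (g i) * R (g i) (g ℓ) := by
      rw [← Finset.sum_sub_distrib]
      apply Finset.sum_congr rfl
      intros
      ring
    show (Matrix.vecMul x A) ℓ = 0
    rw [e1, e2]
    linarith
  have hx0 : x = 0 := by
    calc x = Matrix.vecMul x (1 : Matrix (Fin (k : ℕ)) (Fin (k : ℕ)) ℝ) :=
          (Matrix.vecMul_one x).symm
    _ = Matrix.vecMul x (A * A⁻¹) := by rw [Matrix.mul_nonsing_inv A hAdet]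
    _ = Matrix.vecMul (Matrix.vecMul x A) A⁻¹ := (Matrix.vecMul_vecMul x A A⁻¹).symm
    _ = 0 := by rw [hxA, Matrix.zero_vecMul]
  funext j
  rcases lt_trichotomy j k with hj | hj | hj
  · have h0 := congrFun hx0 ⟨(j : ℕ), hj⟩
    have hgj : g ⟨(j : ℕ), hj⟩ = j := rfl
    simp only [hx, hgj, Pi.zero_apply] at h0
    linarith
  · rw [hj, hv.1, hv'.1]
  · rw [hv.2.1 j hj, hv'.2.1 j hj]

private noncomputable def cAux (R : Matrix (Fin d) (Fin d) ℝ)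
    (u : Fin d → Fin d → ℝ) (k : Fin d) (p : ℕ) : ℝ :=
  if h : p < (k : ℕ) then
    (- R k ⟨p, h.trans k.isLt⟩
        - ∑ ℓ : Fin p, cAux R u k ℓ.1
            * uR R (u ⟨ℓ.1, (ℓ.isLt.trans h).trans k.isLt⟩) ⟨p, h.trans k.isLt⟩)
      / uR R (u ⟨p, h.trans k.isLt⟩) ⟨p, h.trans k.isLt⟩
  else 0
termination_by p
decreasing_by exact Fin.is_lt _

end MMatrixAux

/-- For a nonsingular M-matrix `R`, every entry of `u_k` is
nonnegative and `u_kᵀ R_{:,i} ≤ 0` for every `i > k`. -/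
theorem mmatrix_uk_nonneg_and_uR_nonpos
    {d : ℕ} (R : Matrix (Fin d) (Fin d) ℝ) (hR : IsMMatrix R)
    (u : Fin d → Fin d → ℝ) (hu : ∀ k, IsUk R k (u k)) :
    ∀ k : Fin d, (∀ j, 0 ≤ u k j) ∧ (∀ i, k < i → uR R (u k) i ≤ 0) := by
  have part2 : ∀ k : Fin d, (∀ j, 0 ≤ u k j) → ∀ i, k < i → uR R (u k) i ≤ 0 := by
    intro k h1 i hi
    rw [uR]
    apply Finset.sum_nonpos
    intro j _
    rcases le_or_gt j k with hj | hj
    · have hRji : R j i ≤ 0 := hR.1 j i (ne_of_lt (lt_of_le_of_lt hj hi))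
      nlinarith [h1 j, hRji]
    · rw [(hu k).2.1 j hj, zero_mul]
  have main : ∀ n : ℕ, ∀ k : Fin d, (k : ℕ) = n → ∀ j, 0 ≤ u k j := by
    intro n
    induction n using Nat.strong_induction_on with
    | _ n IH =>
    intro k hkn
    have hcnn : ∀ p : ℕ, 0 ≤ cAux R u k p := by
      intro p
      induction p using Nat.strong_induction_on with
      | _ p IHp =>
      rw [cAux]
      split
      case isTrue h =>
        apply div_nonneg
        · have hsum : (∑ ℓ : Fin p, cAux R u k ℓ.1
              * uR R (u ⟨ℓ.1, (ℓ.isLt.trans h).trans k.isLt⟩) ⟨p, h.trans k.isLt⟩) ≤ 0 := by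
            apply Finset.sum_nonpos
            intro ℓ _
            have hunn : ∀ j, 0 ≤ u ⟨ℓ.1, (ℓ.isLt.trans h).trans k.isLt⟩ j :=
              IH ℓ.1 (by omega) _ rfl
            have hlt : (⟨ℓ.1, (ℓ.isLt.trans h).trans k.isLt⟩ : Fin d)
                < ⟨p, h.trans k.isLt⟩ := Fin.lt_def.mpr ℓ.isLt
            have huRle := part2 _ hunn _ hlt
            nlinarith [IHp ℓ.1 ℓ.isLt, huRle]
          have hRk : R k ⟨p, h.trans k.isLt⟩ ≤ 0 := by
            apply hR.1
            intro hc
            have := congrArg Fin.val hc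
            simp at this
            omega
          linarith
        · exact (diag_pos hR (hu ⟨p, h.trans k.isLt⟩)).le
      case isFalse h => exact le_rfl
    have hex : IsUk R k (fun j => (if j = k then (1 : ℝ) else 0)
        + ∑ ℓ ∈ Finset.univ.filter (fun ℓ : Fin d => ℓ < k), cAux R u k ℓ.1 * u ℓ j) := by
      refine ⟨?_, ?_, ?_⟩
      · show (if k = k then (1 : ℝ) else 0) + _ = 1
        rw [if_pos rfl]
        have hz : ∑ ℓ ∈ Finset.univ.filter (fun ℓ : Fin d => ℓ < k),
            cAux R u k ℓ.1 * u ℓ k = 0 := by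
          apply Finset.sum_eq_zero
          intro ℓ hℓ
          rw [(hu ℓ).2.1 k (Finset.mem_filter.mp hℓ).2, mul_zero]
        rw [hz, add_zero]
      · intro j hj
        show (if j = k then (1 : ℝ) else 0) + _ = 0
        rw [if_neg (ne_of_gt hj)]
        have hz : ∑ ℓ ∈ Finset.univ.filter (fun ℓ : Fin d => ℓ < k),
            cAux R u k ℓ.1 * u ℓ j = 0 := by
          apply Finset.sum_eq_zero
          intro ℓ hℓ
          rw [(hu ℓ).2.1 j (lt_trans (Finset.mem_filter.mp hℓ).2 hj), mul_zero]
        rw [hz, add_zero]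
      · intro ℓ₀ hℓ₀
        have hstep1 : ∑ j ∈ Finset.univ.filter (fun j : Fin d => j < k),
            ((if j = k then (1 : ℝ) else 0)
              + ∑ ℓ ∈ Finset.univ.filter (fun ℓ : Fin d => ℓ < k),
                  cAux R u k ℓ.1 * u ℓ j) * R j ℓ₀
            = ∑ ℓ ∈ Finset.univ.filter (fun ℓ : Fin d => ℓ < k),
                cAux R u k ℓ.1 * uR R (u ℓ) ℓ₀ := by
          have e1 : ∀ j ∈ Finset.univ.filter (fun j : Fin d => j < k),
              ((if j = k then (1 : ℝ) else 0)
                + ∑ ℓ ∈ Finset.univ.filter (fun ℓ : Fin d => ℓ < k),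
                    cAux R u k ℓ.1 * u ℓ j) * R j ℓ₀
              = ∑ ℓ ∈ Finset.univ.filter (fun ℓ : Fin d => ℓ < k),
                  cAux R u k ℓ.1 * (u ℓ j * R j ℓ₀) := by
            intro j hj
            rw [if_neg (ne_of_lt (Finset.mem_filter.mp hj).2), zero_add, Finset.sum_mul]
            apply Finset.sum_congr rfl
            intros
            ring
          rw [Finset.sum_congr rfl e1, Finset.sum_comm]
          apply Finset.sum_congr rfl
          intro ℓ hℓ
          rw [← Finset.mul_sum]
          congr 1
          apply filter_sum_eq_uR
          intro j hjk
          exact (hu ℓ).2.1 j (lt_of_lt_of_le (Finset.mem_filter.mp hℓ).2 (not_lt.mp hjk))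
        have hsplit := Finset.sum_filter_add_sum_filter_not
          (Finset.univ.filter (fun ℓ : Fin d => ℓ < k)) (fun ℓ : Fin d => ℓ < ℓ₀)
          (fun ℓ : Fin d => cAux R u k ℓ.1 * uR R (u ℓ) ℓ₀)
        have hff1 : (Finset.univ.filter (fun ℓ : Fin d => ℓ < k)).filter
            (fun ℓ : Fin d => ℓ < ℓ₀) = Finset.univ.filter (fun ℓ : Fin d => ℓ < ℓ₀) := by
          ext ℓ
          simp only [Finset.mem_filter, Finset.mem_univ, true_and]
          exact ⟨fun hh => hh.2, fun hh => ⟨lt_trans hh hℓ₀, hh⟩⟩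
        have hff2 : ∑ ℓ ∈ (Finset.univ.filter (fun ℓ : Fin d => ℓ < k)).filter
            (fun ℓ : Fin d => ¬ ℓ < ℓ₀), cAux R u k ℓ.1 * uR R (u ℓ) ℓ₀
            = cAux R u k (ℓ₀ : ℕ) * uR R (u ℓ₀) ℓ₀ := by
          rw [Finset.sum_eq_single ℓ₀]
          · intro b hb hbne
            have hb' := Finset.mem_filter.mp hb
            have hb'' := Finset.mem_filter.mp hb'.1
            have : ℓ₀ < b := lt_of_le_of_ne (not_lt.mp hb'.2) (Ne.symm hbne)
            rw [uR_offdiag R (hu b) this, mul_zero]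
          · intro hno
            exact absurd (by simp [hℓ₀] :
              ℓ₀ ∈ (Finset.univ.filter (fun ℓ : Fin d => ℓ < k)).filter
                (fun ℓ : Fin d => ¬ ℓ < ℓ₀)) hno
        have hc0 : cAux R u k (ℓ₀ : ℕ) * uR R (u ℓ₀) ℓ₀
            = - R k ℓ₀ - ∑ ℓ ∈ Finset.univ.filter (fun ℓ : Fin d => ℓ < ℓ₀),
                cAux R u k ℓ.1 * uR R (u ℓ) ℓ₀ := by
          have hlt : (ℓ₀ : ℕ) < (k : ℕ) := hℓ₀
          rw [cAux, dif_pos hlt]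
          have hT : uR R (u ⟨(ℓ₀ : ℕ), hlt.trans k.isLt⟩) ⟨(ℓ₀ : ℕ), hlt.trans k.isLt⟩ ≠ 0 := by
            have : (⟨(ℓ₀ : ℕ), hlt.trans k.isLt⟩ : Fin d) = ℓ₀ := Fin.ext rfl
            rw [this]
            exact ne_of_gt (diag_pos hR (hu ℓ₀))
          rw [div_mul_cancel₀ _ ?hne]
          case hne =>
            have heq : (⟨(ℓ₀ : ℕ), hlt.trans k.isLt⟩ : Fin d) = ℓ₀ := Fin.ext rfl
            rw [heq]
            exact ne_of_gt (diag_pos hR (hu ℓ₀))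
          have heq : (⟨(ℓ₀ : ℕ), hlt.trans k.isLt⟩ : Fin d) = ℓ₀ := Fin.ext rfl
          rw [heq]
          congr 1
          rw [sum_filter_lt' ℓ₀ (fun ℓ : Fin d => cAux R u k ℓ.1 * uR R (u ℓ) ℓ₀)]
          apply Finset.sum_congr rfl
          intro i _
          rfl
        rw [hstep1, ← hsplit, hff1, hff2, hc0]
        ring
    have hveq : u k = (fun j => (if j = k then (1 : ℝ) else 0)
        + ∑ ℓ ∈ Finset.univ.filter (fun ℓ : Fin d => ℓ < k), cAux R u k ℓ.1 * u ℓ j) :=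
      uk_unique hR (hu k) hex
    intro j
    rw [hveq]
    apply add_nonneg
    · split <;> norm_num
    · apply Finset.sum_nonneg
      intro ℓ hℓ
      have hℓk : ℓ < k := (Finset.mem_filter.mp hℓ).2
      have hℓn : (ℓ : ℕ) < n := by
        have : (ℓ : ℕ) < (k : ℕ) := hℓk
        omega
      exact mul_nonneg (hcnn (ℓ : ℕ)) (IH (ℓ : ℕ) hℓn ℓ rfl j)
  intro k
  exact ⟨main (k : ℕ) k rfl, part2 k (main (k : ℕ) k rfl)⟩

end SRBMPaper
end
end

section
/- Let d ≥ 1, let Γ be a d×d symmetric positive definite real matrix and R a d×d real matrix, and fix r ∈ (0,1). Suppose the Borel probability measures π^r, ν_1^r, …, ν_d^r on ℝ₊^d satisfy the basic adjoint relationship. Then for every θ ∈ ℝ^d, the truncated MGF-BAR identity holds: (1/2) θᵀΓθ · ψ^r(θ) + Σ_{i=1}^d r^i θᵀR_{:,i} (ψ_i^r(θ) − ψ^r(θ)) + γ^r(θ) = 0, where ψ^r(θ) = ∫ f̃_θ dπ^r, ψ_i^r(θ) = ∫ f̃_θ dν_i^r, and γ^r(θ) is the extra term. In particular, if θ_j ≤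 0 for all j, then γ^r(θ) = 0 and the MGF-BAR holds: (1/2) θᵀΓθ · φ^r(θ) + Σ_{i=1}^d r^i θᵀR_{:,i} (φ_i^r(θ) − φ^r(θ)) = 0, where φ^r(θ) = ∫ e^{θᵀz} dπ^r(z) and φ_i^r(θ) = ∫ e^{θᵀz} dν_i^r(z). -/
open MeasureTheory Filter

noncomputable section

namespace SRBMPaper

/- ### Auxiliary lemmas -/

def pP (x : ℝ) : ℝ := 3*x^5 - 22*x^4 + 62*x^3 - 84*x^2 + 56*x - 14
def pP' (x : ℝ) : ℝ := 15*x^4 - 88*x^3 + 186*x^2 - 168*x + 56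
def pP'' (x : ℝ) : ℝ := 60*x^3 - 264*x^2 + 372*x - 168

def kappaD (x : ℝ) : ℝ := if x ≤ 1 then 1 else if x ≤ 2 then pP' x else 0
def kappaDD (x : ℝ) : ℝ := if x ≤ 1 then 0 else if x ≤ 2 then pP'' x else 0

lemma hasDerivAt_pP (x : ℝ) : HasDerivAt pP (pP' x) x := by
  have h : HasDerivAt (fun x : ℝ => 3*x^5 - 22*x^4 + 62*x^3 - 84*x^2 + 56*x - 14)
      (3*(↑5*x^(5-1)) - 22*(↑4*x^(4-1)) + 62*(↑3*x^(3-1)) - 84*(↑2*x^(2-1)) + 56*1 - 0) x :=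
    ((((((hasDerivAt_pow 5 x).const_mul 3).sub ((hasDerivAt_pow 4 x).const_mul 22)).add
      ((hasDerivAt_pow 3 x).const_mul 62)).sub ((hasDerivAt_pow 2 x).const_mul 84)).add
      ((hasDerivAt_id x).const_mul 56)).sub (hasDerivAt_const x 14)
  convert h using 1
  · rfl
  unfold pP'
  norm_num
  ring

lemma hasDerivAt_pP' (x : ℝ) : HasDerivAt pP' (pP'' x) x := by
  have h : HasDerivAt (fun x : ℝ => 15*x^4 - 88*x^3 + 186*x^2 - 168*x + 56)
      (15*(↑4*x^(4-1)) - 88*(↑3*x^(3-1)) + 186*(↑2*x^(2-1)) - 168*1 + 0) x :=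
    (((((hasDerivAt_pow 4 x).const_mul 15).sub ((hasDerivAt_pow 3 x).const_mul 88)).add
      ((hasDerivAt_pow 2 x).const_mul 186)).sub ((hasDerivAt_id x).const_mul 168)).add
      (hasDerivAt_const x 56)
  convert h using 1
  · rfl
  unfold pP''
  norm_num
  ring

lemma hasDerivAt_glue {f g : ℝ → ℝ} {a y : ℝ} (hf : HasDerivAt f y a) (hg : HasDerivAt g y a)
    (heq : f a = g a) : HasDerivAt (fun x => if x ≤ a then f x else g x) y a := by
  have h1 : HasDerivWithinAt (fun x => if x ≤ a then f x else g x) y (Set.Iic a) a :=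
    hf.hasDerivWithinAt.congr (fun x hx => if_pos hx) (if_pos le_rfl)
  have h2 : HasDerivWithinAt (fun x => if x ≤ a then f x else g x) y (Set.Ici a) a := by
    refine hg.hasDerivWithinAt.congr (fun x hx => ?_) (by simp [heq])
    by_cases h : x ≤ a
    · have : x = a := le_antisymm h hx
      subst this; simp [heq]
    · exact if_neg h
  have h3 := h1.union h2
  rw [Set.Iic_union_Ici] at h3
  exact h3.hasDerivAt (by simp)

lemma kappa_eq (x : ℝ) : kappa x = if x ≤ 1 then x else if x ≤ 2 then pP x else 2 := rfl

def gK (x : ℝ) : ℝ := if x ≤ 2 then pP x else 2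
def gK' (x : ℝ) : ℝ := if x ≤ 2 then pP' x else 0

lemma hasDerivAt_gK (x : ℝ) : HasDerivAt gK (gK' x) x := by
  rcases lt_trichotomy x 2 with h | h | h
  · have he : gK =ᶠ[nhds x] pP := by
      filter_upwards [Iio_mem_nhds h] with t ht
      exact if_pos (le_of_lt ht)
    rw [gK', if_pos h.le]
    exact (hasDerivAt_pP x).congr_of_eventuallyEq he
  · subst h
    have h0 : pP' 2 = 0 := by unfold pP'; norm_num
    have hglue : HasDerivAt (fun x => if x ≤ 2 then pP x else (fun _ => (2:ℝ)) x) 0 2 := by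
      refine hasDerivAt_glue ?_ (hasDerivAt_const 2 2) (by unfold pP; norm_num)
      simpa [h0] using hasDerivAt_pP 2
    rw [gK', if_pos le_rfl, h0]
    exact hglue
  · have he : gK =ᶠ[nhds x] (fun _ => (2:ℝ)) := by
      filter_upwards [Ioi_mem_nhds h] with t ht
      exact if_neg (not_le.mpr ht)
    rw [gK', if_neg (not_le.mpr h)]
    exact (hasDerivAt_const x 2).congr_of_eventuallyEq he

lemma hasDerivAt_kappa (x : ℝ) : HasDerivAt kappa (kappaD x) x := by
  have hk : kappa = fun x => if x ≤ 1 then x else gK x := rfl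
  rcases lt_trichotomy x 1 with h | h | h
  · have he : kappa =ᶠ[nhds x] (fun t => t) := by
      filter_upwards [Iio_mem_nhds h] with t ht
      rw [hk]; exact if_pos ht.le
    rw [kappaD, if_pos h.le]
    exact (hasDerivAt_id x).congr_of_eventuallyEq he
  · subst h
    have h1 : gK' 1 = 1 := by rw [gK', if_pos (by norm_num)]; unfold pP'; norm_num
    have hg : HasDerivAt gK 1 1 := by have := hasDerivAt_gK 1; rwa [h1] at this
    have : HasDerivAt (fun x => if x ≤ 1 then x else gK x) 1 1 := by
      refine hasDerivAt_glue (hasDerivAt_id 1) hg ?_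
      rw [gK, if_pos (by norm_num)]; unfold pP; norm_num
    rw [kappaD, if_pos le_rfl]
    exact hk ▸ this
  · have he : kappa =ᶠ[nhds x] gK := by
      filter_upwards [Ioi_mem_nhds h] with t ht
      rw [hk]; exact if_neg (not_le.mpr ht)
    have : kappaD x = gK' x := by rw [kappaD, gK', if_neg (not_le.mpr h)]
    rw [this]
    exact (hasDerivAt_gK x).congr_of_eventuallyEq he

def gD' (x : ℝ) : ℝ := if x ≤ 2 then pP'' x else 0

lemma hasDerivAt_gK' (x : ℝ) : HasDerivAt gK' (gD' x) x := by
  rcases lt_trichotomy x 2 with h | h | h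
  · have he : gK' =ᶠ[nhds x] pP' := by
      filter_upwards [Iio_mem_nhds h] with t ht
      exact if_pos (le_of_lt ht)
    rw [gD', if_pos h.le]
    exact (hasDerivAt_pP' x).congr_of_eventuallyEq he
  · subst h
    have h0 : pP'' 2 = 0 := by unfold pP''; norm_num
    have hglue : HasDerivAt (fun x => if x ≤ 2 then pP' x else (fun _ => (0:ℝ)) x) 0 2 := by
      refine hasDerivAt_glue ?_ (hasDerivAt_const 2 0) (by unfold pP'; norm_num)
      simpa [h0] using hasDerivAt_pP' 2
    rw [gD', if_pos le_rfl, h0]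
    exact hglue
  · have he : gK' =ᶠ[nhds x] (fun _ => (0:ℝ)) := by
      filter_upwards [Ioi_mem_nhds h] with t ht
      exact if_neg (not_le.mpr ht)
    rw [gD', if_neg (not_le.mpr h)]
    exact (hasDerivAt_const x 0).congr_of_eventuallyEq he

lemma hasDerivAt_kappaD (x : ℝ) : HasDerivAt kappaD (kappaDD x) x := by
  have hk : kappaD = fun x => if x ≤ 1 then (fun _ => (1:ℝ)) x else gK' x := rfl
  rcases lt_trichotomy x 1 with h | h | h
  · have he : kappaD =ᶠ[nhds x] (fun _ => (1:ℝ)) := by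
      filter_upwards [Iio_mem_nhds h] with t ht
      rw [hk]; exact if_pos ht.le
    rw [kappaDD, if_pos h.le]
    exact (hasDerivAt_const x 1).congr_of_eventuallyEq he
  · subst h
    have h1 : gD' 1 = 0 := by rw [gD', if_pos (by norm_num)]; unfold pP''; norm_num
    have hg : HasDerivAt gK' 0 1 := by have := hasDerivAt_gK' 1; rwa [h1] at this
    have : HasDerivAt (fun x => if x ≤ 1 then (fun _ => (1:ℝ)) x else gK' x) 0 1 := by
      refine hasDerivAt_glue (hasDerivAt_const 1 1) hg ?_
      rw [gK', if_pos (by norm_num)]; unfold pP'; norm_num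
    rw [kappaDD, if_pos le_rfl]
    exact hk ▸ this
  · have he : kappaD =ᶠ[nhds x] gK' := by
      filter_upwards [Ioi_mem_nhds h] with t ht
      rw [hk]; exact if_neg (not_le.mpr ht)
    have : kappaDD x = gD' x := by rw [kappaDD, gD', if_neg (not_le.mpr h)]
    rw [this]
    exact (hasDerivAt_gK' x).congr_of_eventuallyEq he

lemma deriv_kappa : deriv kappa = kappaD := funext fun x => (hasDerivAt_kappa x).deriv

lemma deriv_kappaD : deriv kappaD = kappaDD := funext fun x => (hasDerivAt_kappaD x).deriv

lemma continuous_kappaDD : Continuous kappaDD := by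
  have hin : Continuous gD' := by
    apply Continuous.if_le (by unfold pP''; fun_prop) continuous_const continuous_id
      continuous_const
    intro x hx
    have hx2 : x = 2 := hx
    rw [hx2]; unfold pP''; norm_num
  have : kappaDD = fun x => if x ≤ 1 then (fun _ => (0:ℝ)) x else gD' x := rfl
  rw [this]
  apply Continuous.if_le continuous_const hin continuous_id continuous_const
  intro x hx
  have hx1 : x = 1 := hx
  rw [hx1, gD', if_pos (by norm_num)]; unfold pP''; norm_num

lemma contDiff_kappa : ContDiff ℝ 2 kappa := by
  rw [show (2:WithTop ℕ∞) = 1 + 1 by norm_num, contDiff_succ_iff_deriv]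
  refine ⟨fun x => (hasDerivAt_kappa x).differentiableAt, by simp, ?_⟩
  rw [deriv_kappa, contDiff_one_iff_deriv]
  exact ⟨fun x => (hasDerivAt_kappaD x).differentiableAt, deriv_kappaD ▸ continuous_kappaDD⟩

lemma kappa_le_two (x : ℝ) : kappa x ≤ 2 := by
  rw [kappa]
  split_ifs with h1 h2
  · linarith
  · push_neg at h1
    nlinarith [sq_nonneg (3*x-2), pow_le_pow_left₀ (by linarith : (0:ℝ) ≤ 2 - x) (le_refl (2-x)) 3,
      mul_nonneg (mul_nonneg (by linarith : (0:ℝ) ≤ 2-x) (by linarith : (0:ℝ) ≤ 2-x)) (by linarith : (0:ℝ) ≤ 2-x),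
      sq_nonneg (x-2), sq_nonneg x]
  · norm_num

lemma kappaD_nonneg (x : ℝ) : 0 ≤ kappaD x := by
  rw [kappaD]
  split_ifs with h1 h2
  · norm_num
  · push_neg at h1
    have : pP' x = (x-2)^2 * (15*x^2 - 28*x + 14) := by unfold pP'; ring
    rw [this]
    apply mul_nonneg (sq_nonneg _)
    nlinarith [sq_nonneg (15*x - 14)]
  · norm_num

lemma kappaD_le (x : ℝ) : kappaD x ≤ 74 := by
  rw [kappaD]
  split_ifs with h1 h2
  · norm_num
  · push_neg at h1
    have h : pP' x = (x-2)^2 * (15*x^2 - 28*x + 14) := by unfold pP'; ring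
    rw [h]
    nlinarith [sq_nonneg (x-2), sq_nonneg (15*x-14), mul_nonneg (sq_nonneg (x-2)) (sq_nonneg x)]
  · norm_num

lemma kappaDD_abs_le (x : ℝ) : |kappaDD x| ≤ 2448 := by
  rw [kappaDD, abs_le]
  split_ifs with h1 h2
  · norm_num
  · push_neg at h1
    unfold pP''
    constructor <;> nlinarith [sq_nonneg (x-1), sq_nonneg (x-2), sq_nonneg x,
      mul_nonneg (mul_nonneg (by linarith : (0:ℝ) ≤ x-1) (by linarith : (0:ℝ) ≤ 2-x)) (by linarith : (0:ℝ) ≤ x),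
      mul_nonneg (by linarith : (0:ℝ) ≤ x-1) (by linarith : (0:ℝ) ≤ 2-x)]
  · norm_num

lemma kappa_of_le_one {x : ℝ} (h : x ≤ 1) : kappa x = x := if_pos h
lemma kappaD_of_le_one {x : ℝ} (h : x ≤ 1) : kappaD x = 1 := if_pos h
lemma kappaDD_of_le_one {x : ℝ} (h : x ≤ 1) : kappaDD x = 0 := if_pos h


lemma continuous_kappa : Continuous kappa := by
  have h : Differentiable ℝ kappa := fun x => (hasDerivAt_kappa x).differentiableAt
  exact h.continuous

lemma continuous_kappaD : Continuous kappaD := by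
  have h : Differentiable ℝ kappaD := fun x => (hasDerivAt_kappaD x).differentiableAt
  exact h.continuous

variable {d : ℕ}

def Eg (θ : Fin d → ℝ) (j : Fin d) (z : Fin d → ℝ) : ℝ := θ j * kappaD (θ j * z j)

def Eh (θ : Fin d → ℝ) (i j : Fin d) (z : Fin d → ℝ) : ℝ :=
  Eg θ i z * Eg θ j z + (if i = j then θ i ^ 2 * kappaDD (θ i * z i) else 0)

lemma epsG_eq (θ : Fin d → ℝ) (j : Fin d) (z : Fin d → ℝ) :
    epsG θ j z = Eg θ j z - θ j := by
  rw [epsG, Eg, deriv_kappa]; ring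

lemma epsH_eq (θ : Fin d → ℝ) (i j : Fin d) (z : Fin d → ℝ) :
    epsH θ i j z = Eh θ i j z - θ i * θ j := by
  rw [epsH, Eh, Eg, Eg, deriv_kappa, deriv_kappaD]
  by_cases h : i = j
  · subst h; simp; ring
  · simp [h]; ring

lemma continuous_coord (θ : Fin d → ℝ) (i : Fin d) :
    Continuous (fun z : Fin d → ℝ => θ i * z i) :=
  continuous_const.mul (continuous_apply i)

lemma continuous_ftilde (θ : Fin d → ℝ) : Continuous (ftilde θ) := by
  unfold ftilde
  exact Real.continuous_exp.comp (continuous_finset_sum _ fun i _ =>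
    continuous_kappa.comp (continuous_coord θ i))

lemma continuous_Eg (θ : Fin d → ℝ) (j : Fin d) : Continuous (Eg θ j) :=
  continuous_const.mul (continuous_kappaD.comp (continuous_coord θ j))

lemma continuous_epsG (θ : Fin d → ℝ) (j : Fin d) : Continuous (epsG θ j) := by
  unfold epsG; rw [deriv_kappa]
  exact continuous_const.mul ((continuous_kappaD.comp (continuous_coord θ j)).sub continuous_const)

lemma continuous_epsH (θ : Fin d → ℝ) (i j : Fin d) : Continuous (epsH θ i j) := by
  unfold epsH; rw [deriv_kappa, deriv_kappaD]
  apply Continuous.add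
  · exact continuous_const.mul
      (((continuous_kappaD.comp (continuous_coord θ i)).mul
        (continuous_kappaD.comp (continuous_coord θ j))).sub continuous_const)
  · by_cases h : i = j
    · simp only [h, if_true]
      exact continuous_const.mul (continuous_kappaDD.comp (continuous_coord θ j))
    · simp only [h, if_false]; exact continuous_const

lemma contDiff_ftilde (θ : Fin d → ℝ) : ContDiff ℝ 2 (ftilde θ) := by
  unfold ftilde
  apply (Real.contDiff_exp (n := 2)).comp
  apply ContDiff.sum
  intro i _
  apply contDiff_kappa.comp
  exact contDiff_const.mul ((ContinuousLinearMap.proj (R := ℝ) (φ := fun _ : Fin d => ℝ) i).contDiff)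

lemma hasFDerivAt_coordMul (θ : Fin d → ℝ) (i : Fin d) (z : Fin d → ℝ) :
    HasFDerivAt (fun w : Fin d → ℝ => θ i * w i)
      ((θ i) • ContinuousLinearMap.proj (R := ℝ) (φ := fun _ : Fin d => ℝ) i) z := by
  have h := ((θ i) • ContinuousLinearMap.proj (R := ℝ) (φ := fun _ : Fin d => ℝ) i).hasFDerivAt (x := z)
  apply h.congr_of_eventuallyEq
  filter_upwards with w
  simp

lemma hasFDerivAt_kappaCoord (θ : Fin d → ℝ) (i : Fin d) (z : Fin d → ℝ) :
    HasFDerivAt (fun w : Fin d → ℝ => kappa (θ i * w i))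
      ((θ i * kappaD (θ i * z i)) • ContinuousLinearMap.proj (R := ℝ) (φ := fun _ : Fin d => ℝ) i) z := by
  have h := (hasDerivAt_kappa (θ i * z i)).comp_hasFDerivAt z (hasFDerivAt_coordMul θ i z)
  rw [smul_smul, mul_comm (kappaD (θ i * z i)) (θ i)] at h
  exact h

def DF (θ z : Fin d → ℝ) : (Fin d → ℝ) →L[ℝ] ℝ :=
  ftilde θ z • ∑ i, (θ i * kappaD (θ i * z i)) • ContinuousLinearMap.proj (R := ℝ) (φ := fun _ : Fin d => ℝ) i

lemma hasFDerivAt_ftilde (θ z : Fin d → ℝ) : HasFDerivAt (ftilde θ) (DF θ z) z := by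
  have hsum : HasFDerivAt (fun w : Fin d → ℝ => ∑ i, kappa (θ i * w i))
      (∑ i, (θ i * kappaD (θ i * z i)) • ContinuousLinearMap.proj (R := ℝ) (φ := fun _ : Fin d => ℝ) i) z :=
    HasFDerivAt.fun_sum (fun i _ => hasFDerivAt_kappaCoord θ i z)
  exact (Real.hasDerivAt_exp _).comp_hasFDerivAt z hsum

lemma DF_apply (θ z : Fin d → ℝ) (j : Fin d) :
    DF θ z (Pi.single j 1) = Eg θ j z * ftilde θ z := by
  rw [DF, Eg]
  simp only [ContinuousLinearMap.smul_apply, ContinuousLinearMap.sum_apply,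
    ContinuousLinearMap.proj_apply, Pi.single_apply, smul_eq_mul, mul_ite, mul_one, mul_zero]
  rw [Finset.sum_ite_eq' Finset.univ j (fun i => θ i * kappaD (θ i * z i))]
  simp [mul_comm]

lemma pd1_ftilde (θ : Fin d → ℝ) (j : Fin d) (z : Fin d → ℝ) :
    pd1 (ftilde θ) j z = Eg θ j z * ftilde θ z := by
  rw [pd1, (hasFDerivAt_ftilde θ z).fderiv, DF_apply]

lemma hasFDerivAt_Eg (θ : Fin d → ℝ) (j : Fin d) (z : Fin d → ℝ) :
    HasFDerivAt (Eg θ j)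
      ((θ j * (θ j * kappaDD (θ j * z j))) • ContinuousLinearMap.proj (R := ℝ) (φ := fun _ : Fin d => ℝ) j) z := by
  have h1 := (hasDerivAt_kappaD (θ j * z j)).comp_hasFDerivAt z (hasFDerivAt_coordMul θ j z)
  have h2 := h1.const_mul (θ j)
  rw [smul_smul, smul_smul] at h2
  have e : θ j * kappaDD (θ j * z j) * θ j = θ j * (θ j * kappaDD (θ j * z j)) := by ring
  rw [e] at h2
  exact h2

lemma pd2_ftilde (θ : Fin d → ℝ) (i j : Fin d) (z : Fin d → ℝ) :
    pd2 (ftilde θ) i j z = Eh θ i j z * ftilde θ z := by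
  rw [pd2]
  have hfun : (fun w => pd1 (ftilde θ) j w) = fun w => Eg θ j w * ftilde θ w :=
    funext fun w => pd1_ftilde θ j w
  rw [hfun]
  have hmul := (hasFDerivAt_Eg θ j z).fun_mul (hasFDerivAt_ftilde θ z)
  rw [hmul.fderiv]
  rw [ContinuousLinearMap.add_apply, ContinuousLinearMap.smul_apply,
    ContinuousLinearMap.smul_apply, DF_apply]
  simp only [ContinuousLinearMap.smul_apply, ContinuousLinearMap.proj_apply,
    Pi.single_apply, smul_eq_mul]
  rw [Eh]
  by_cases h : i = j
  · subst h; simp; ring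
  · have h' : ¬ (j = i) := fun hh => h hh.symm
    simp only [if_neg h, if_neg h', mul_zero]; ring


lemma ftilde_pos (θ z : Fin d → ℝ) : 0 < ftilde θ z := Real.exp_pos _

lemma ftilde_le (θ z : Fin d → ℝ) : ftilde θ z ≤ Real.exp (2 * d) := by
  rw [ftilde, Real.exp_le_exp]
  calc ∑ i, kappa (θ i * z i) ≤ ∑ _i : Fin d, 2 :=
        Finset.sum_le_sum (fun i _ => kappa_le_two _)
    _ = 2 * d := by simp [Finset.sum_const, Finset.card_univ]; ring

lemma Eg_abs_le (θ : Fin d → ℝ) (j : Fin d) (z : Fin d → ℝ) :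
    |Eg θ j z| ≤ |θ j| * 74 := by
  rw [Eg, abs_mul, abs_of_nonneg (kappaD_nonneg _)]
  exact mul_le_mul_of_nonneg_left (kappaD_le _) (abs_nonneg _)

lemma epsG_abs_le (θ : Fin d → ℝ) (j : Fin d) (z : Fin d → ℝ) :
    |epsG θ j z| ≤ |θ j| * 75 := by
  rw [epsG, deriv_kappa, abs_mul]
  apply mul_le_mul_of_nonneg_left _ (abs_nonneg _)
  have h1 := kappaD_nonneg (θ j * z j)
  have h2 := kappaD_le (θ j * z j)
  rw [abs_le]; constructor <;> linarith

lemma Eh_abs_le (θ : Fin d → ℝ) (i j : Fin d) (z : Fin d → ℝ) :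
    |Eh θ i j z| ≤ |θ i| * |θ j| * 5476 + θ i ^ 2 * 2448 := by
  rw [Eh]
  apply le_trans (abs_add_le _ _)
  apply add_le_add
  · rw [abs_mul]
    calc |Eg θ i z| * |Eg θ j z| ≤ (|θ i| * 74) * (|θ j| * 74) :=
          mul_le_mul (Eg_abs_le θ i z) (Eg_abs_le θ j z) (abs_nonneg _)
            (by positivity)
      _ = |θ i| * |θ j| * 5476 := by ring
  · by_cases h : i = j
    · rw [if_pos h, abs_mul, abs_of_nonneg (sq_nonneg (θ i))]
      exact mul_le_mul_of_nonneg_left (kappaDD_abs_le _) (sq_nonneg _)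
    · rw [if_neg h, abs_zero]; positivity

lemma epsH_abs_le (θ : Fin d → ℝ) (i j : Fin d) (z : Fin d → ℝ) :
    |epsH θ i j z| ≤ |θ i| * |θ j| * 5477 + θ i ^ 2 * 2448 := by
  rw [epsH_eq]
  apply le_trans (abs_sub _ _)
  have h := Eh_abs_le θ i j z
  have : |θ i * θ j| = |θ i| * |θ j| := abs_mul _ _
  nlinarith [abs_nonneg (θ i), abs_nonneg (θ j), sq_nonneg (θ i)]

lemma isC2Bounded_ftilde (θ : Fin d → ℝ) : IsC2Bounded (ftilde θ) := by
  refine ⟨contDiff_ftilde θ, ?_⟩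
  set M : ℝ := 1 + ∑ p, |θ p| with hM
  have hsumnn : (0:ℝ) ≤ ∑ p, |θ p| := Finset.sum_nonneg fun p _ => abs_nonneg _
  have hM1 : 1 ≤ M := by simp [hM]; linarith
  have hMθ : ∀ p, |θ p| ≤ M := fun p => by
    have h1 : |θ p| ≤ ∑ q, |θ q| :=
      Finset.single_le_sum (f := fun q => |θ q|) (fun q _ => abs_nonneg _) (Finset.mem_univ p)
    simp [hM]; linarith
  have hE : (0:ℝ) < Real.exp (2 * d) := Real.exp_pos _
  refine ⟨10000 * M ^ 2 * Real.exp (2 * d), fun z _ => ⟨?_, fun j => ?_, fun i j => ?_⟩⟩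
  · rw [abs_of_pos (ftilde_pos θ z)]
    have h2 := ftilde_le θ z
    have h5 : (1:ℝ) ≤ 10000 * M ^ 2 := by nlinarith
    nlinarith [mul_le_mul_of_nonneg_right h5 hE.le]
  · rw [pd1_ftilde, abs_mul, abs_of_pos (ftilde_pos θ z)]
    have h1 := Eg_abs_le θ j z
    have h2 := ftilde_le θ z
    have h3 := hMθ j
    have h4 : |Eg θ j z| * ftilde θ z ≤ (M * 74) * Real.exp (2 * d) := by
      apply mul_le_mul (by nlinarith [abs_nonneg (θ j)]) h2 (ftilde_pos θ z).le (by nlinarith)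
    have h5 : M * 74 ≤ 10000 * M ^ 2 := by nlinarith
    nlinarith [mul_le_mul_of_nonneg_right h5 hE.le]
  · rw [pd2_ftilde, abs_mul, abs_of_pos (ftilde_pos θ z)]
    have h1 := Eh_abs_le θ i j z
    have h2 := ftilde_le θ z
    have h3 := hMθ i
    have h4 := hMθ j
    have hai := abs_nonneg (θ i)
    have haj := abs_nonneg (θ j)
    have h5 : |Eh θ i j z| ≤ M * M * 5476 + M * M * 2448 := by
      have : θ i ^ 2 = |θ i| * |θ i| := by rw [← abs_mul, ← sq, abs_of_nonneg (sq_nonneg _)]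
      nlinarith
    have h6 : |Eh θ i j z| * ftilde θ z ≤ (M * M * 5476 + M * M * 2448) * Real.exp (2 * d) := by
      apply mul_le_mul h5 h2 (ftilde_pos θ z).le (by nlinarith)
    have h7 : M * M * 5476 + M * M * 2448 ≤ 10000 * M ^ 2 := by nlinarith
    nlinarith [mul_le_mul_of_nonneg_right h7 hE.le]

lemma integrable_of_bc {f : (Fin d → ℝ) → ℝ} (μ : Measure (Fin d → ℝ)) [IsFiniteMeasure μ]
    (hf : Continuous f) (C : ℝ) (hC : ∀ z, |f z| ≤ C) : Integrable f μ :=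
  ⟨hf.aestronglyMeasurable,
    HasFiniteIntegral.of_bounded (C := C)
      (Eventually.of_forall (by simpa [Real.norm_eq_abs] using hC))⟩

lemma integrable_ftilde (θ : Fin d → ℝ) (μ : Measure (Fin d → ℝ)) [IsFiniteMeasure μ] :
    Integrable (ftilde θ) μ :=
  integrable_of_bc μ (continuous_ftilde θ) (Real.exp (2 * d))
    (fun z => by rw [abs_of_pos (ftilde_pos θ z)]; exact ftilde_le θ z)

lemma integrable_g_mul_ftilde (θ : Fin d → ℝ) {g : (Fin d → ℝ) → ℝ}
    (hg : Continuous g) (C : ℝ) (hC : ∀ z, |g z| ≤ C)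
    (μ : Measure (Fin d → ℝ)) [IsFiniteMeasure μ] :
    Integrable (fun z => g z * ftilde θ z) μ := by
  apply integrable_of_bc μ (hg.fun_mul (continuous_ftilde θ)) (C * Real.exp (2 * d))
  intro z
  rw [abs_mul, abs_of_pos (ftilde_pos θ z)]
  have h0 : (0:ℝ) ≤ C := le_trans (abs_nonneg _) (hC z)
  exact mul_le_mul (hC z) (ftilde_le θ z) (ftilde_pos θ z).le h0

lemma integrable_epsG_sum (θ : Fin d → ℝ) (R : Matrix (Fin d) (Fin d) ℝ) (i : Fin d)
    (μ : Measure (Fin d → ℝ)) [IsFiniteMeasure μ] :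
    Integrable (fun z => (∑ j, epsG θ j z * R j i) * ftilde θ z) μ := by
  apply integrable_g_mul_ftilde θ
    (continuous_finset_sum _ fun j _ => (continuous_epsG θ j).fun_mul continuous_const)
    (∑ j, |θ j| * 75 * |R j i|)
  intro z
  apply le_trans (Finset.abs_sum_le_sum_abs _ _)
  apply Finset.sum_le_sum
  intro j _
  rw [abs_mul]
  exact mul_le_mul_of_nonneg_right (epsG_abs_le θ j z) (abs_nonneg _)

lemma integrable_epsH_sum (θ : Fin d → ℝ) (Γ : Matrix (Fin d) (Fin d) ℝ)
    (μ : Measure (Fin d → ℝ)) [IsFiniteMeasure μ] :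
    Integrable (fun z => (∑ i, ∑ j, Γ i j * epsH θ i j z) * ftilde θ z) μ := by
  apply integrable_g_mul_ftilde θ
    (continuous_finset_sum _ fun i _ => continuous_finset_sum _ fun j _ =>
      continuous_const.fun_mul (continuous_epsH θ i j))
    (∑ i, ∑ j, |Γ i j| * (|θ i| * |θ j| * 5477 + θ i ^ 2 * 2448))
  intro z
  apply le_trans (Finset.abs_sum_le_sum_abs _ _)
  apply Finset.sum_le_sum
  intro i _
  apply le_trans (Finset.abs_sum_le_sum_abs _ _)
  apply Finset.sum_le_sum
  intro j _
  rw [abs_mul]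
  exact mul_le_mul_of_nonneg_left (epsH_abs_le θ i j z) (abs_nonneg _)

lemma integral_pd1_sum (θ : Fin d → ℝ) (R : Matrix (Fin d) (Fin d) ℝ) (i : Fin d)
    (μ : Measure (Fin d → ℝ)) [IsFiniteMeasure μ] :
    ∫ z, ∑ j, R j i * pd1 (ftilde θ) j z ∂μ
      = (∑ j, θ j * R j i) * (∫ z, ftilde θ z ∂μ)
        + ∫ z, (∑ j, epsG θ j z * R j i) * ftilde θ z ∂μ := by
  have hptw : ∀ z, ∑ j, R j i * pd1 (ftilde θ) j z
      = (∑ j, θ j * R j i) * ftilde θ z + (∑ j, epsG θ j z * R j i) * ftilde θ z := by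
    intro z
    rw [Finset.sum_mul, Finset.sum_mul, ← Finset.sum_add_distrib]
    apply Finset.sum_congr rfl
    intro j _
    rw [pd1_ftilde, epsG_eq]
    ring
  simp only [hptw]
  rw [integral_add ((integrable_ftilde θ μ).const_mul _) (integrable_epsG_sum θ R i μ),
    integral_const_mul]

lemma integral_pd2_sum (θ : Fin d → ℝ) (Γ : Matrix (Fin d) (Fin d) ℝ)
    (μ : Measure (Fin d → ℝ)) [IsFiniteMeasure μ] :
    ∫ z, ∑ i, ∑ j, Γ i j * pd2 (ftilde θ) i j z ∂μ
      = (∑ i, ∑ j, θ i * Γ i j * θ j) * (∫ z, ftilde θ z ∂μ)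
        + ∫ z, (∑ i, ∑ j, Γ i j * epsH θ i j z) * ftilde θ z ∂μ := by
  have hptw : ∀ z, ∑ i, ∑ j, Γ i j * pd2 (ftilde θ) i j z
      = (∑ i, ∑ j, θ i * Γ i j * θ j) * ftilde θ z
        + (∑ i, ∑ j, Γ i j * epsH θ i j z) * ftilde θ z := by
    intro z
    rw [Finset.sum_mul, Finset.sum_mul, ← Finset.sum_add_distrib]
    apply Finset.sum_congr rfl
    intro i _
    rw [Finset.sum_mul, Finset.sum_mul, ← Finset.sum_add_distrib]
    apply Finset.sum_congr rfl
    intro j _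
    rw [pd2_ftilde, epsH_eq]
    ring
  simp only [hptw]
  rw [integral_add ((integrable_ftilde θ μ).const_mul _) (integrable_epsH_sum θ Γ μ),
    integral_const_mul]


/-- The truncated MGF-BAR identity: for any `θ`,
`(1/2) θᵀΓθ ψ^r(θ) + ∑ᵢ rⁱ θᵀR_{:,i}(ψᵢ^r(θ) − ψ^r(θ)) + γ^r(θ) = 0`; and for
`θ ≤ 0` the extra term vanishes, yielding the (untruncated) MGF-BAR. -/
theorem truncated_mgf_bar
    {d : ℕ} (hd : 1 ≤ d)
    (Γ R : Matrix (Fin d) (Fin d) ℝ)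
    (hΓsymm : Γ.IsSymm) (hΓpd : Γ.PosDef)
    (r : ℝ) (hr : r ∈ Set.Ioo (0 : ℝ) 1)
    (π : Measure (Fin d → ℝ)) (ν : Fin d → Measure (Fin d → ℝ))
    (hπ : IsProbabilityMeasure π) (hπO : π (posOrthant d) = 1)
    (hν : ∀ i, IsProbabilityMeasure (ν i) ∧
      ν i {z | z ∈ posOrthant d ∧ z i = 0} = 1)
    (hBAR : SatisfiesBAR Γ R r π ν) :
    (∀ θ : Fin d → ℝ,
      (1 / 2) * (∑ i, ∑ j, θ i * Γ i j * θ j) * (∫ z, ftilde θ z ∂π)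
        + (∑ i : Fin d, r ^ ((i : ℕ) + 1) * (∑ j, θ j * R j i) *
            ((∫ z, ftilde θ z ∂(ν i)) - ∫ z, ftilde θ z ∂π))
        + gammaTerm Γ R r π ν θ = 0) ∧
    (∀ θ : Fin d → ℝ, (∀ j, θ j ≤ 0) →
      gammaTerm Γ R r π ν θ = 0 ∧
      (1 / 2) * (∑ i, ∑ j, θ i * Γ i j * θ j)
          * (∫ z, Real.exp (∑ j, θ j * z j) ∂π)
        + (∑ i : Fin d, r ^ ((i : ℕ) + 1) * (∑ j, θ j * R j i) *
            ((∫ z, Real.exp (∑ j, θ j * z j) ∂(ν i))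
              - ∫ z, Real.exp (∑ j, θ j * z j) ∂π)) = 0)  := by
  haveI := hπ
  haveI : ∀ i, IsProbabilityMeasure (ν i) := fun i => (hν i).1
  have hmain : ∀ θ : Fin d → ℝ,
      (1 / 2) * (∑ i, ∑ j, θ i * Γ i j * θ j) * (∫ z, ftilde θ z ∂π)
        + (∑ i : Fin d, r ^ ((i : ℕ) + 1) * (∑ j, θ j * R j i) *
            ((∫ z, ftilde θ z ∂(ν i)) - ∫ z, ftilde θ z ∂π))
        + gammaTerm Γ R r π ν θ = 0 := by
    intro θ
    have hbar := hBAR (ftilde θ) (isC2Bounded_ftilde θ)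
    rw [integral_pd2_sum θ Γ π] at hbar
    simp only [integral_pd1_sum θ R] at hbar
    have e1 : (∑ i : Fin d, r ^ ((i : ℕ) + 1) * (∑ j, θ j * R j i) *
            ((∫ z, ftilde θ z ∂(ν i)) - ∫ z, ftilde θ z ∂π))
        + (∑ i : Fin d, r ^ ((i : ℕ) + 1) *
            ((∫ z, (∑ j, epsG θ j z * R j i) * ftilde θ z ∂(ν i))
              - ∫ z, (∑ j, epsG θ j z * R j i) * ftilde θ z ∂π))
        = (∑ i : Fin d, r ^ ((i : ℕ) + 1) *
            ((∑ j, θ j * R j i) * (∫ z, ftilde θ z ∂(ν i))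
              + ∫ z, (∑ j, epsG θ j z * R j i) * ftilde θ z ∂(ν i)))
          - (∑ i : Fin d, r ^ ((i : ℕ) + 1) *
            ((∑ j, θ j * R j i) * (∫ z, ftilde θ z ∂π)
              + ∫ z, (∑ j, epsG θ j z * R j i) * ftilde θ z ∂π)) := by
      rw [← Finset.sum_sub_distrib, ← Finset.sum_add_distrib]
      apply Finset.sum_congr rfl
      intro i _
      ring
    simp only [gammaTerm]
    linear_combination hbar + e1
  refine ⟨hmain, fun θ hθ => ?_⟩
  have horthC : IsClosed (posOrthant d) := by
    have h : posOrthant d = ⋂ i, (fun z : Fin d → ℝ => z i) ⁻¹' Set.Ici 0 := by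
      ext z; simp [posOrthant, Set.mem_iInter]
    rw [h]
    exact isClosed_iInter fun i => isClosed_Ici.preimage (continuous_apply i)
  have hπae : ∀ᵐ z ∂π, z ∈ posOrthant d := by
    rw [MeasureTheory.ae_iff]
    have hc : {z : Fin d → ℝ | ¬ z ∈ posOrthant d} = (posOrthant d)ᶜ := rfl
    rw [hc, measure_compl horthC.measurableSet (measure_ne_top _ _), measure_univ, hπO,
      tsub_self]
  have hνae : ∀ i, ∀ᵐ z ∂(ν i), z ∈ posOrthant d := by
    intro i
    have hSc : IsClosed {z : Fin d → ℝ | z ∈ posOrthant d ∧ z i = 0} :=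
      horthC.inter (isClosed_eq (continuous_apply i) continuous_const)
    have h0 : ν i {z : Fin d → ℝ | z ∈ posOrthant d ∧ z i = 0}ᶜ = 0 := by
      rw [measure_compl hSc.measurableSet (measure_ne_top _ _), measure_univ, (hν i).2,
        tsub_self]
    rw [MeasureTheory.ae_iff]
    refine measure_mono_null ?_ h0
    intro z hz hzS
    exact hz hzS.1
  have hle : ∀ z ∈ posOrthant d, ∀ j, θ j * z j ≤ 1 := by
    intro z hz j
    nlinarith [mul_le_mul_of_nonneg_right (hθ j) (hz j)]
  have hH : ∀ z ∈ posOrthant d, (∑ i, ∑ j, Γ i j * epsH θ i j z) * ftilde θ z = 0 := by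
    intro z hz
    have h : ∀ i j : Fin d, epsH θ i j z = 0 := by
      intro i j
      rw [epsH, deriv_kappa, deriv_kappaD, kappaD_of_le_one (hle z hz i),
        kappaD_of_le_one (hle z hz j), kappaDD_of_le_one (hle z hz i)]
      simp
    simp [h]
  have hGf : ∀ (i : Fin d), ∀ z ∈ posOrthant d,
      (∑ j, epsG θ j z * R j i) * ftilde θ z = 0 := by
    intro i z hz
    have h : ∀ j : Fin d, epsG θ j z = 0 := by
      intro j
      rw [epsG, deriv_kappa, kappaD_of_le_one (hle z hz j)]
      ring
    simp [h]
  have hgamma : gammaTerm Γ R r π ν θ = 0 := by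
    simp only [gammaTerm]
    have h1 : ∫ z, (∑ i, ∑ j, Γ i j * epsH θ i j z) * ftilde θ z ∂π = 0 := by
      have he : (fun z => (∑ i, ∑ j, Γ i j * epsH θ i j z) * ftilde θ z)
          =ᵐ[π] (fun _ => (0:ℝ)) := by
        filter_upwards [hπae] with z hz using hH z hz
      rw [integral_congr_ae he, integral_zero]
    have h2 : ∀ i : Fin d, ∫ z, (∑ j, epsG θ j z * R j i) * ftilde θ z ∂(ν i) = 0 := by
      intro i
      have he : (fun z => (∑ j, epsG θ j z * R j i) * ftilde θ z) =ᵐ[ν i] (fun _ => (0:ℝ)) := by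
        filter_upwards [hνae i] with z hz using hGf i z hz
      rw [integral_congr_ae he, integral_zero]
    have h3 : ∀ i : Fin d, ∫ z, (∑ j, epsG θ j z * R j i) * ftilde θ z ∂π = 0 := by
      intro i
      have he : (fun z => (∑ j, epsG θ j z * R j i) * ftilde θ z) =ᵐ[π] (fun _ => (0:ℝ)) := by
        filter_upwards [hπae] with z hz using hGf i z hz
      rw [integral_congr_ae he, integral_zero]
    rw [h1]
    simp [h2, h3]
  refine ⟨hgamma, ?_⟩
  have hfeq : ∀ z ∈ posOrthant d, ftilde θ z = Real.exp (∑ j, θ j * z j) := by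
    intro z hz
    rw [ftilde]
    congr 1
    exact Finset.sum_congr rfl fun j _ => kappa_of_le_one (hle z hz j)
  have hIπ : ∫ z, ftilde θ z ∂π = ∫ z, Real.exp (∑ j, θ j * z j) ∂π :=
    integral_congr_ae (by filter_upwards [hπae] with z hz using hfeq z hz)
  have hIν : ∀ i : Fin d, ∫ z, ftilde θ z ∂(ν i) = ∫ z, Real.exp (∑ j, θ j * z j) ∂(ν i) :=
    fun i => integral_congr_ae (by filter_upwards [hνae i] with z hz using hfeq z hz)
  have h := hmain θ
  rw [hgamma, hIπ] at h
  simp only [hIν] at h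
  linarith [h]

end SRBMPaper
end
end
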